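/- Let n, N ≥ 1 and let λ = (λ_1 ≥ … ≥ λ_n ≥ 0) be a partition with at most n parts. Then applying the substitution ∫_Y to det(x_i^{λ_j+n−j})_{1≤i,j≤n} · det(x_i^{n−j})_{1≤i,j≤n} (which equals S_λ(X)·Δ(X)^2) yields: ∫_Y ( det(x_i^{λ_j+n−j}) · det(x_i^{n−j}) ) = (−1)^{n(n−1)/2} · n! · det( Λ^{λ_i+(n−1)−i+j}(Y) )_{1≤i,j≤n}. By the dual Jacobi–Trudi formula the right-hand determinant is the Schur polynomial S_{μ'}(Y) for μ = λ + ((n−1)^n), so (1/n!)∫_Y S_λ(X)Δ(X)^2 = (−1)^{n(n−1)/2} S_{(λ+(n−1)^n)'}(Y). -/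

import Mathlib

/-- `Λ N p` is the `p`-th elementary symmetric polynomial in `N` variables,
with the convention that it vanishes for `p < 0` (and for `p > N`). -/
noncomputable def Λ (N : ℕ) (p : ℤ) : MvPolynomial (Fin N) ℤ :=
  if 0 ≤ p then MvPolynomial.esymm (Fin N) ℤ p.toNat else 0

/-- The substitution `∫_Y` sending each monomial `x_1^{d_1} ⋯ x_n^{d_n}` to
`Λ^{d_1}(Y) ⋯ Λ^{d_n}(Y)`, extended `ℤ`-linearly. -/
noncomputable def intY (n N : ℕ) (P : MvPolynomial (Fin n) ℤ) :
    MvPolynomial (Fin N) ℤ :=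
  ∑ d ∈ P.support, P.coeff d • ∏ i, Λ N ((d i : ℤ))

open Equiv MvPolynomial

lemma intY_zero (n N : ℕ) : intY n N 0 = 0 := by
  simp [intY]

lemma intY_eq_sum_subset (n N : ℕ) (P : MvPolynomial (Fin n) ℤ)
    (s : Finset (Fin n →₀ ℕ)) (hs : P.support ⊆ s) :
    intY n N P = ∑ d ∈ s, P.coeff d • ∏ i, Λ N ((d i : ℤ)) := by
  unfold intY
  refine Finset.sum_subset hs fun d _ hd => ?_
  rw [MvPolynomial.notMem_support_iff.mp hd, zero_smul]

lemma intY_add (n N : ℕ) (P Q : MvPolynomial (Fin n) ℤ) :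
    intY n N (P + Q) = intY n N P + intY n N Q := by
  classical
  rw [intY_eq_sum_subset n N (P + Q) (P.support ∪ Q.support) (MvPolynomial.support_add),
    intY_eq_sum_subset n N P (P.support ∪ Q.support) Finset.subset_union_left,
    intY_eq_sum_subset n N Q (P.support ∪ Q.support) Finset.subset_union_right,
    ← Finset.sum_add_distrib]
  refine Finset.sum_congr rfl fun d _ => ?_
  rw [MvPolynomial.coeff_add, add_smul]

lemma intY_sum {α : Type*} (n N : ℕ) (s : Finset α) (f : α → MvPolynomial (Fin n) ℤ) :
    intY n N (∑ a ∈ s, f a) = ∑ a ∈ s, intY n N (f a) := by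
  classical
  induction s using Finset.cons_induction with
  | empty => simp [intY_zero]
  | cons a s ha ih => rw [Finset.sum_cons, intY_add, ih, Finset.sum_cons]

lemma intY_monomial (n N : ℕ) (d : Fin n →₀ ℕ) (c : ℤ) :
    intY n N (MvPolynomial.monomial d c) = c • ∏ i, Λ N ((d i : ℤ)) := by
  unfold intY
  rw [MvPolynomial.support_monomial]
  by_cases hc : c = 0
  · simp [hc]
  · simp [hc, MvPolynomial.coeff_monomial]

lemma prod_X_pow_eq_monomial' (n : ℕ) (d : Fin n → ℕ) :
    (∏ i, (MvPolynomial.X i : MvPolynomial (Fin n) ℤ) ^ d i)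
      = MvPolynomial.monomial (Finsupp.equivFunOnFinite.symm d) 1 := by
  rw [← MvPolynomial.prod_X_pow_eq_monomial]
  refine (Finset.prod_subset (Finset.subset_univ _) fun i _ hi => ?_).symm
  have hz : d i = 0 := Finsupp.notMem_support_iff.mp hi
  rw [hz, pow_zero]

lemma revPerm_mul_finRotate (n : ℕ) :
    (Fin.revPerm : Equiv.Perm (Fin (n + 1))) * finRotate (n + 1) =
      finSuccEquivLast.symm.permCongr (Fin.revPerm : Equiv.Perm (Fin n)).optionCongr := by
  ext i
  refine Fin.lastCases ?_ (fun i => ?_) i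
  · simp [Equiv.Perm.mul_apply, finRotate_last, Equiv.permCongr_apply,
      finSuccEquivLast_last]
  · have hne : (Fin.castSucc i) ≠ Fin.last n := (Fin.castSucc_lt_last i).ne
    have hi := i.isLt
    simp [Equiv.Perm.mul_apply, Equiv.permCongr_apply, Equiv.optionCongr_apply,
      finSuccEquivLast_castSucc, finSuccEquivLast_symm_some, Fin.val_rev,
      coe_finRotate_of_ne_last hne]

lemma sign_revPerm (n : ℕ) :
    Equiv.Perm.sign (Fin.revPerm : Equiv.Perm (Fin n)) = (-1) ^ (n * (n - 1) / 2) := by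
  induction n with
  | zero =>
    have h : (Fin.revPerm : Equiv.Perm (Fin 0)) = 1 := Equiv.ext fun i => i.elim0
    simp [h]
  | succ n ih =>
    have h := congrArg Equiv.Perm.sign (revPerm_mul_finRotate n)
    rw [map_mul, sign_finRotate, Equiv.Perm.sign_permCongr, Equiv.optionCongr_sign, ih] at h
    have hsq : ((-1 : ℤˣ)) ^ n * (-1) ^ n = 1 := by
      rw [← pow_add]
      exact Even.neg_one_pow ⟨n, rfl⟩
    have key : Equiv.Perm.sign (Fin.revPerm : Equiv.Perm (Fin (n + 1)))
        = (-1) ^ (n * (n - 1) / 2) * (-1) ^ n := by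
      calc Equiv.Perm.sign (Fin.revPerm : Equiv.Perm (Fin (n + 1)))
          = Equiv.Perm.sign (Fin.revPerm : Equiv.Perm (Fin (n + 1)))
            * ((-1) ^ n * (-1) ^ n) := by rw [hsq, mul_one]
        _ = (Equiv.Perm.sign (Fin.revPerm : Equiv.Perm (Fin (n + 1))) * (-1) ^ n)
            * (-1) ^ n := by rw [mul_assoc]
        _ = (-1) ^ (n * (n - 1) / 2) * (-1) ^ n := by rw [Nat.add_sub_cancel] at h; rw [h]
    rw [key, ← pow_add]
    congr 1
    rcases n with _ | m
    · rfl
    · rcases Nat.even_mul_succ_self m with ⟨k, hk⟩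
      have e1 : m + 1 - 1 = m := rfl
      have e2 : m + 1 + 1 - 1 = m + 1 := rfl
      rw [e1, e2]
      have h1 : (m + 1) * m = 2 * k := by rw [Nat.mul_comm]; omega
      have h2 : (m + 1 + 1) * (m + 1) = (m + 1) * m + 2 * (m + 1) := by ring
      omega

lemma intY_det_mul_det (n N : ℕ) (e₁ e₂ : Fin n → ℕ) :
    intY n N
        ((Matrix.of fun i j : Fin n => (MvPolynomial.X i : MvPolynomial (Fin n) ℤ) ^ e₁ j).det *
          (Matrix.of fun i j : Fin n => (MvPolynomial.X i : MvPolynomial (Fin n) ℤ) ^ e₂ j).det)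
      = (Nat.factorial n) •
          (Matrix.of fun i j : Fin n => Λ N ((e₁ i + e₂ j : ℕ) : ℤ)).det := by
  classical
  have hprod : ∀ (σ : Equiv.Perm (Fin n)) (e : Fin n → ℕ),
      (∏ i, (MvPolynomial.X (σ i) : MvPolynomial (Fin n) ℤ) ^ e i)
        = ∏ i, (MvPolynomial.X i : MvPolynomial (Fin n) ℤ) ^ e (σ⁻¹ i) := by
    intro σ e
    rw [← Equiv.prod_comp σ (fun i => (MvPolynomial.X i : MvPolynomial (Fin n) ℤ) ^ e (σ⁻¹ i))]
    simp
  have hdet2 :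
      ((Matrix.of fun i j : Fin n => (MvPolynomial.X i : MvPolynomial (Fin n) ℤ) ^ e₁ j).det *
        (Matrix.of fun i j : Fin n => (MvPolynomial.X i : MvPolynomial (Fin n) ℤ) ^ e₂ j).det)
      = ∑ σ : Equiv.Perm (Fin n), ∑ τ : Equiv.Perm (Fin n),
          MvPolynomial.monomial
            (Finsupp.equivFunOnFinite.symm fun i => e₁ (σ⁻¹ i) + e₂ (τ⁻¹ i))
            ((Equiv.Perm.sign σ : ℤ) * (Equiv.Perm.sign τ : ℤ)) := by
    rw [Matrix.det_apply, Matrix.det_apply, Finset.sum_mul_sum]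
    refine Finset.sum_congr rfl fun σ _ => Finset.sum_congr rfl fun τ _ => ?_
    simp only [Matrix.of_apply, Units.smul_def, MvPolynomial.smul_eq_C_mul]
    rw [hprod σ e₁, hprod τ e₂, mul_mul_mul_comm, ← MvPolynomial.C_mul,
      ← Finset.prod_mul_distrib]
    simp_rw [← pow_add]
    rw [prod_X_pow_eq_monomial', MvPolynomial.C_mul_monomial, mul_one]
  rw [hdet2, intY_sum]
  simp_rw [intY_sum, intY_monomial]
  have happ : ∀ (f : Fin n → ℕ) (i : Fin n), (Finsupp.equivFunOnFinite.symm f) i = f i :=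
    fun f i => rfl
  simp_rw [happ]
  have hswap : ∀ σ τ : Equiv.Perm (Fin n),
      (∏ i, Λ N ((e₁ (σ⁻¹ i) + e₂ (τ⁻¹ i) : ℕ) : ℤ))
        = ∏ i, Λ N ((e₁ (σ⁻¹ (τ i)) + e₂ i : ℕ) : ℤ) := by
    intro σ τ
    rw [← Equiv.prod_comp τ (fun i => Λ N ((e₁ (σ⁻¹ i) + e₂ (τ⁻¹ i) : ℕ) : ℤ))]
    simp
  simp_rw [hswap]
  rw [Finset.sum_comm]
  have hinner : ∀ τ : Equiv.Perm (Fin n),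
      (∑ σ : Equiv.Perm (Fin n), ((Equiv.Perm.sign σ : ℤ) * (Equiv.Perm.sign τ : ℤ)) •
          ∏ i, Λ N ((e₁ (σ⁻¹ (τ i)) + e₂ i : ℕ) : ℤ))
        = ∑ ρ : Equiv.Perm (Fin n), (Equiv.Perm.sign ρ : ℤ) •
            ∏ i, Λ N ((e₁ (ρ i) + e₂ i : ℕ) : ℤ) := by
    intro τ
    refine (Fintype.sum_bijective (fun ρ : Equiv.Perm (Fin n) => τ * ρ⁻¹)
      ((Group.mulLeft_bijective τ).comp inv_involutive.bijective) _ _ fun ρ => ?_).symm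
    have h1 : (τ * ρ⁻¹)⁻¹ * τ = ρ := by group
    have h2 : ∀ i, (τ * ρ⁻¹)⁻¹ (τ i) = ρ i := fun i => by
      rw [← Equiv.Perm.mul_apply, h1]
    have hcoef : ((Equiv.Perm.sign (τ * ρ⁻¹) : ℤ) * (Equiv.Perm.sign τ : ℤ))
        = (Equiv.Perm.sign ρ : ℤ) := by
      rw [← Units.val_mul, map_mul, Equiv.Perm.sign_inv, mul_right_comm,
        Int.units_mul_self, one_mul]
    simp only [h2, hcoef]
  simp_rw [hinner]
  rw [Finset.sum_const, Finset.card_univ, Fintype.card_perm, Fintype.card_fin]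
  congr 1
  rw [Matrix.det_apply]
  refine Finset.sum_congr rfl fun ρ _ => ?_
  rw [Units.smul_def]
  simp

/-- The case `k = 1`: applying `∫_Y` to `S_λ(X) Δ(X)^2`, written as
`det(x_i^{λ_j+n−j}) ⋅ det(x_i^{n−j})`, gives (up to sign and the factor `n!`)
the Schur polynomial `S_{(λ+(n−1)^n)'}(Y)`, expressed through the dual
Jacobi–Trudi determinant `det(Λ^{λ_i+(n−1)−i+j}(Y))`. -/
theorem intY_schur_vandermonde_sq
    (n N : ℕ) (hn : 1 ≤ n) (hN : 1 ≤ N)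
    (lam : Fin n → ℕ) (hlam : Antitone lam) :
    intY n N
        ((Matrix.of fun i j : Fin n =>
            MvPolynomial.X i ^ (lam j + (n - 1 - (j : ℕ)))).det *
          (Matrix.of fun i j : Fin n =>
            (MvPolynomial.X i : MvPolynomial (Fin n) ℤ) ^ (n - 1 - (j : ℕ))).det)
      = ((-1 : ℤ) ^ (n * (n - 1) / 2) * (Nat.factorial n : ℤ)) •
          (Matrix.of fun i j : Fin n =>
            Λ N ((lam i + (n - 1 - (i : ℕ)) + (j : ℕ) : ℕ))).det := by
  classical
  have key := intY_det_mul_det n N (fun j => lam j + (n - 1 - (j : ℕ)))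
    (fun j => n - 1 - (j : ℕ))
  rw [key]
  have hCT : (Matrix.of fun i j : Fin n =>
        Λ N ((((fun j => lam j + (n - 1 - (j : ℕ))) i + (fun j => n - 1 - (j : ℕ)) j : ℕ)) : ℤ))
      = (Matrix.of fun i j : Fin n =>
          Λ N ((lam i + (n - 1 - (i : ℕ)) + (j : ℕ) : ℕ))).submatrix id Fin.revPerm := by
    ext i j
    simp only [Matrix.submatrix_apply, Matrix.of_apply, id]
    congr 1
    have hj := j.isLt
    have hval : ((Fin.revPerm j : Fin n) : ℕ) = n - 1 - (j : ℕ) := by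
      simp [Fin.val_rev]
      omega
    rw [hval]
  rw [hCT, Matrix.det_permute', sign_revPerm]
  rw [nsmul_eq_mul, zsmul_eq_mul]
  push_cast [Units.val_pow_eq_pow_val]
  ring
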